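/- A (0,1)-matrix X of order n ≥ 2 is fully indecomposable if and only if every entry of X equal to 1 belongs to a nonzero diagonal of X and every entry of X equal to 0 belongs to a diagonal of X all of whose other elements equal 1. -/

import Mathlib

open SimpleGraph

/-- A stable (independent) set of vertices: pairwise nonadjacent. -/
def IsStableSet {V : Type*} (G : SimpleGraph V) (S : Set V) : Prop :=
  S.Pairwise fun u v => ¬ G.Adj u v

/-- The stability number `α(G)`: maximum cardinality of a stable set. -/
noncomputable def stabNum {V : Type*} (G : SimpleGraph V) : ℕ :=
  sSup {k | ∃ S : Set V, IsStableSet G S ∧ S.ncard = k}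

/-- A maximum stable set. -/
def IsMaxStableSet {V : Type*} (G : SimpleGraph V) (S : Set V) : Prop :=
  IsStableSet G S ∧ S.ncard = stabNum G

/-- `G` is α⁺-stable: adding any edge between nonadjacent vertices keeps α. -/
def AlphaPlusStable {V : Type*} (G : SimpleGraph V) : Prop :=
  ∀ x y : V, x ≠ y → ¬ G.Adj x y →
    stabNum (G ⊔ SimpleGraph.fromEdgeSet {s(x, y)}) = stabNum G

/-- `G` is α⁻-stable: deleting any edge keeps α. -/
def AlphaMinusStable {V : Type*} (G : SimpleGraph V) : Prop :=
  ∀ e ∈ G.edgeSet, stabNum (G.deleteEdges {e}) = stabNum G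

/-- `G` is α-stable: both α⁺-stable and α⁻-stable. -/
def AlphaStable {V : Type*} (G : SimpleGraph V) : Prop :=
  AlphaPlusStable G ∧ AlphaMinusStable G

/-- `{A, B}` is a bipartition of `G`. -/
def IsBipartition {V : Type*} (G : SimpleGraph V) (A B : Set V) : Prop :=
  Disjoint A B ∧ A ∪ B = Set.univ ∧
    ∀ ⦃x y⦄, G.Adj x y → (x ∈ A ∧ y ∈ B) ∨ (x ∈ B ∧ y ∈ A)

/-- `G` is bistable bipartite w.r.t. bipartition `{A, B}`:
`A` and `B` are its only maximum stable sets. -/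
def BistableBipartite {V : Type*} (G : SimpleGraph V) (A B : Set V) : Prop :=
  IsBipartition G A B ∧ ∀ S : Set V, IsMaxStableSet G S ↔ S = A ∨ S = B

/-- `G` has a perfect matching. -/
def HasPerfectMatching {V : Type*} (G : SimpleGraph V) : Prop :=
  ∃ M : G.Subgraph, M.IsPerfectMatching

/-- `X` has a `k` by `n - k` zero submatrix for some `1 ≤ k ≤ n - 1`. -/
def HasZeroSubmatrix {m : Type*} [Fintype m] (X : Matrix m m ℕ) : Prop :=
  ∃ R C : Finset m, R.Nonempty ∧ C.Nonempty ∧ R.card + C.card = Fintype.card m ∧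
    ∀ i ∈ R, ∀ j ∈ C, X i j = 0

/-- A square matrix is partly decomposable. -/
def PartlyDecomposable {m : Type*} [Fintype m] (X : Matrix m m ℕ) : Prop :=
  (Fintype.card m = 1 ∧ ∀ i j, X i j = 0) ∨ HasZeroSubmatrix X

/-- A square matrix is fully indecomposable iff it is not partly decomposable. -/
def FullyIndecomposable {m : Type*} [Fintype m] (X : Matrix m m ℕ) : Prop :=
  ¬ PartlyDecomposable X

/-- A (0,1)-matrix. -/
def ZeroOne {m k : Type*} (X : Matrix m k ℕ) : Prop :=
  ∀ i j, X i j = 0 ∨ X i j = 1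

/-- The term rank: maximal number of nonzero entries, no two on a line. -/
noncomputable def termRank {m k : Type*} [Fintype m] [Fintype k] (X : Matrix m k ℕ) : ℕ :=
  sSup {r | ∃ (f : Fin r ↪ m) (g : Fin r ↪ k), ∀ i, X (f i) (g i) ≠ 0}

/-- The permanent of a square matrix with natural entries. -/
def perm {m : Type*} [Fintype m] [DecidableEq m] (X : Matrix m m ℕ) : ℕ :=
  ∑ σ : Equiv.Perm m, ∏ i, X (σ i) i

/-- The bipartite graph whose reduced adjacency matrix is the (0,1)-matrix `X`. -/
def matGraph {ι κ : Type*} (X : Matrix ι κ ℕ) : SimpleGraph (ι ⊕ κ) :=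
  SimpleGraph.fromRel fun u v => ∃ i j, u = Sum.inl i ∧ v = Sum.inr j ∧ X i j = 1

lemma key {n : ℕ} (hn : 2 ≤ n) (X : Matrix (Fin n) (Fin n) ℕ)
    (hX : ¬ HasZeroSubmatrix X) (i j : Fin n) :
    ∃ σ : Equiv.Perm (Fin n), σ i = j ∧ ∀ k, k ≠ i → X k (σ k) ≠ 0 := by
  classical
  set t : {k : Fin n // k ≠ i} → Finset (Fin n) :=
    fun k => Finset.univ.filter (fun c => c ≠ j ∧ X k.1 c ≠ 0) with ht
  have hall : ∀ s : Finset {k : Fin n // k ≠ i}, s.card ≤ (s.biUnion t).card := by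
    intro s
    by_contra hlt
    push_neg at hlt
    set S : Finset (Fin n) := s.image Subtype.val with hS
    have hScard : S.card = s.card := Finset.card_image_of_injective _ Subtype.val_injective
    have hspos : 0 < s.card := lt_of_le_of_lt (Nat.zero_le _) hlt
    have hSne : S.Nonempty := by
      rw [← Finset.card_pos, hScard]; exact hspos
    have hiS : i ∉ S := by
      intro hi
      rw [hS] at hi
      obtain ⟨k, _, hk⟩ := Finset.mem_image.mp hi
      exact k.2 hk
    have hScard_le : S.card ≤ n - 1 := by
      have : S ⊆ Finset.univ.erase i := fun x hx =>
        Finset.mem_erase.mpr ⟨fun h => hiS (h ▸ hx), Finset.mem_univ x⟩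
      have := Finset.card_le_card this
      simpa using this
    set N := s.biUnion t with hN
    set C0 := Finset.univ \ (insert j N) with hC0
    have hC0card : n - S.card ≤ C0.card := by
      have h1 : C0.card = n - (insert j N).card := by
        rw [hC0, Finset.card_sdiff_of_subset (Finset.subset_univ _), Finset.card_univ, Fintype.card_fin]
      have h2 : (insert j N).card ≤ N.card + 1 := Finset.card_insert_le _ _
      have h3 : N.card < s.card := hlt
      omega
    obtain ⟨C, hCsub, hCcard⟩ := Finset.exists_subset_card_eq hC0card
    apply hX
    refine ⟨S, C, hSne, ?_, ?_, ?_⟩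
    · rw [← Finset.card_pos, hCcard]
      omega
    · rw [Fintype.card_fin, hCcard, hScard]
      omega
    · intro r hr c hc
      have hcC0 := hCsub hc
      rw [hC0, Finset.mem_sdiff, Finset.mem_insert] at hcC0
      push_neg at hcC0
      obtain ⟨_, hcj, hcN⟩ := hcC0
      obtain ⟨k, hks, hkr⟩ := Finset.mem_image.mp hr
      by_contra hne
      exact hcN (Finset.mem_biUnion.mpr ⟨k, hks,
        Finset.mem_filter.mpr ⟨Finset.mem_univ _, hcj, hkr ▸ hne⟩⟩)
  obtain ⟨f, hfinj, hft⟩ := (Finset.all_card_le_biUnion_card_iff_exists_injective t).mp hall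
  have hfj : ∀ k, f k ≠ j := fun k => ((Finset.mem_filter.mp (hft k)).2).1
  have hfX : ∀ k, X k.1 (f k) ≠ 0 := fun k => ((Finset.mem_filter.mp (hft k)).2).2
  set g : Fin n → Fin n := fun k => if h : k = i then j else f ⟨k, h⟩ with hg
  have hginj : Function.Injective g := by
    intro a b hab
    rw [hg] at hab
    by_cases ha : a = i <;> by_cases hb : b = i
    · rw [ha, hb]
    · simp only [ha, dif_pos, dif_neg hb] at hab
      exact absurd hab.symm (hfj ⟨b, hb⟩)
    · simp only [hb, dif_pos, dif_neg ha] at hab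
      exact absurd hab (hfj ⟨a, ha⟩)
    · simp only [dif_neg ha, dif_neg hb] at hab
      exact Subtype.ext_iff.mp (hfinj hab)
  refine ⟨Equiv.ofBijective g (Finite.injective_iff_bijective.mp hginj), ?_, ?_⟩
  · show g i = j
    simp [hg]
  · intro k hk
    show X k (g k) ≠ 0
    simp only [hg, dif_neg hk]
    exact hfX ⟨k, hk⟩

/-- A (0,1)-matrix `X` of order `n ≥ 2` is fully indecomposable iff every
`1` of `X` belongs to a nonzero diagonal and every `0` of `X` belongs to a diagonal whose
other elements all equal `1`. -/
theorem stmt_9 {n : ℕ} (hn : 2 ≤ n) (X : Matrix (Fin n) (Fin n) ℕ) (h01 : ZeroOne X) :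
    FullyIndecomposable X ↔
      (∀ i j, X i j = 1 →
        ∃ σ : Equiv.Perm (Fin n), σ i = j ∧ ∀ k, X k (σ k) ≠ 0) ∧
      (∀ i j, X i j = 0 →
        ∃ σ : Equiv.Perm (Fin n), σ i = j ∧ ∀ k, k ≠ i → X k (σ k) = 1) := by
  classical
  constructor
  · intro hX
    have hnz : ¬ HasZeroSubmatrix X := fun h => hX (Or.inr h)
    constructor
    · intro i j hij
      obtain ⟨σ, hσi, hσ⟩ := key hn X hnz i j
      refine ⟨σ, hσi, fun k => ?_⟩
      by_cases hk : k = i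
      · rw [hk, hσi, hij]; exact one_ne_zero
      · exact hσ k hk
    · intro i j hij
      obtain ⟨σ, hσi, hσ⟩ := key hn X hnz i j
      refine ⟨σ, hσi, fun k hk => ?_⟩
      rcases h01 k (σ k) with h | h
      · exact absurd h (hσ k hk)
      · exact h
  · rintro ⟨h1, h0⟩ hPD
    rcases hPD with ⟨hcard, _⟩ | ⟨R, C, hR, hC, hsum, hzero⟩
    · rw [Fintype.card_fin] at hcard; omega
    · rw [Fintype.card_fin] at hsum
      have hRcard : R.card ≤ n - 1 := by
        have := hC.card_pos; omega
      have hCcard : C.card ≤ n - 1 := by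
        have := hR.card_pos; omega
      have hRne : R ≠ Finset.univ := by
        intro h
        have := Finset.card_univ (α := Fin n)
        rw [h, this, Fintype.card_fin] at hRcard
        omega
      have hCne : C ≠ Finset.univ := by
        intro h
        have := Finset.card_univ (α := Fin n)
        rw [h, this, Fintype.card_fin] at hCcard
        omega
      obtain ⟨i, hiR⟩ : ∃ i, i ∉ R := by
        by_contra h; push_neg at h
        exact hRne (Finset.eq_univ_iff_forall.mpr h)
      obtain ⟨j, hjC⟩ : ∃ j, j ∉ C := by
        by_contra h; push_neg at h
        exact hCne (Finset.eq_univ_iff_forall.mpr h)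
      -- get a permutation σ with σ i = j and X k (σ k) ≠ 0 for k ≠ i
      obtain ⟨σ, hσi, hσ⟩ : ∃ σ : Equiv.Perm (Fin n), σ i = j ∧ ∀ k, k ≠ i → X k (σ k) ≠ 0 := by
        rcases h01 i j with h | h
        · obtain ⟨σ, hσi, hσ⟩ := h0 i j h
          exact ⟨σ, hσi, fun k hk => by rw [hσ k hk]; exact one_ne_zero⟩
        · obtain ⟨σ, hσi, hσ⟩ := h1 i j h
          exact ⟨σ, hσi, fun k _ => hσ k⟩
      -- σ maps R injectively into (univ \ C).erase j
      have hmap : R.image σ ⊆ (Finset.univ \ C).erase j := by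
        intro c hc
        obtain ⟨k, hkR, hkc⟩ := Finset.mem_image.mp hc
        have hki : k ≠ i := fun h => hiR (h ▸ hkR)
        refine Finset.mem_erase.mpr ⟨?_, Finset.mem_sdiff.mpr ⟨Finset.mem_univ _, ?_⟩⟩
        · intro h
          rw [← hσi] at h
          exact hki (σ.injective (hkc.trans h))
        · intro hcC
          exact hσ k hki (by rw [hkc]; exact hzero k hkR c (hkc ▸ hcC))
      have h1le := Finset.card_le_card hmap
      rw [Finset.card_image_of_injective _ σ.injective] at h1le
      have h2 : ((Finset.univ \ C).erase j).card = (Finset.univ \ C).card - 1 := by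
        apply Finset.card_erase_of_mem
        exact Finset.mem_sdiff.mpr ⟨Finset.mem_univ _, hjC⟩
      have h3 : (Finset.univ \ C).card = n - C.card := by
        rw [Finset.card_sdiff_of_subset (Finset.subset_univ _), Finset.card_univ, Fintype.card_fin]
      have := hR.card_pos
      omega
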